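/- In the 4-element groupoid A = ({0,1,2,3}, ·) with multiplication table 0·y = 0; 1·0=0, 1·1=0, 1·2=0, 1·3=1; 2·0=0, 2·1=0, 2·2=1, 2·3=2; 3·0=0, 3·1=1, 3·2=2, 3·3=2, the maximal value attained by the term function of any binary bracketing s equals max(3 − e, 0), where e is the number of subterms of s of the form ω x x (pairs of eggs); in particular this maximum is attained when all arguments equal 3. -/

import Mathlib

/-- p-ary bracketings: terms over one variable `x` with one p-ary operation symbol `ω`. -/
inductive Brack (p : ℕ) : Type
  | x : Brack p
  | node : (Fin p → Brack p) → Brack p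

namespace Brack

/-- occurrence number: number of occurrences of ω -/
def occ {p : ℕ} : Brack p → ℕ
  | .x => 0
  | .node f => 1 + ∑ i, occ (f i)

/-- length: number of occurrences of x -/
def len {p : ℕ} : Brack p → ℕ
  | .x => 1
  | .node f => ∑ i, len (f i)

/-- evaluation of a bracketing in a groupoid, variables enumerated left-to-right
starting at position `j`. -/
def evalFrom {p : ℕ} {A : Type*} (op : (Fin p → A) → A) (v : ℕ → A) :
    Brack p → ℕ → A
  | .x, j => v j
  | .node f, j =>
      op (fun i => evalFrom op v (f i)
        (j + ∑ k ∈ Finset.univ.filter (· < i), len (f k)))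

/-- the term function induced by a bracketing -/
def eval {p : ℕ} {A : Type*} (op : (Fin p → A) → A) (t : Brack p) (v : ℕ → A) : A :=
  evalFrom op v t 0

/-- prefix word of a bracketing: `true` codes ω, `false` codes x -/
def word {p : ℕ} : Brack p → List Bool
  | .x => [false]
  | .node f => true :: (List.ofFn (fun i => word (f i))).flatten

/-- auxiliary: scan a word, recording 1 + number of x's before each ω -/
def STaux : List Bool → ℕ → List ℕ
  | [], _ => []
  | true :: w, c => (c + 1) :: STaux w c
  | false :: w, c => STaux w (c + 1)

/-- insertion tuple of a bracketing: the i-th entry is one plus the number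
of x's preceding the i-th occurrence of ω in the prefix notation -/
def ST {p : ℕ} (t : Brack p) : List ℕ := STaux (word t) 0

/-- replace the i-th (0-based) occurrence of x in `t` by `s` -/
def replaceLeaf {p : ℕ} : Brack p → ℕ → Brack p → Brack p
  | .x, i, s => if i = 0 then s else .x
  | .node f, i, s => .node (fun j =>
      let off := ∑ k ∈ Finset.univ.filter (· < j), len (f k)
      if off ≤ i ∧ i < off + len (f j) then replaceLeaf (f j) (i - off) s else f j)

/-- β_i : insertion of ω x … x at the i-th (1-based) occurrence of x -/
def beta {p : ℕ} (i : ℕ) (t : Brack p) : Brack p :=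
  replaceLeaf t (i - 1) (.node (fun _ => .x))

/-- left depth: depth of leftmost leaf (binary case) -/
def dl : Brack 2 → ℕ
  | .x => 0
  | .node f => dl (f 0) + 1

/-- right depth: depth of rightmost leaf (binary case) -/
def dr : Brack 2 → ℕ
  | .x => 0
  | .node f => dr (f 1) + 1

/-- left factor of a binary bracketing -/
def leftF : Brack 2 → Brack 2
  | .x => .x
  | .node f => f 0

/-- whether a bracketing is the single variable x -/
def isX {p : ℕ} : Brack p → Bool
  | .x => true
  | .node _ => false

/-- number of pairs of eggs, i.e. subterm occurrences of ω x x (binary case) -/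
def eggs : Brack 2 → ℕ
  | .x => 0
  | .node f => (if isX (f 0) && isX (f 1) then 1 else 0) + eggs (f 0) + eggs (f 1)

end Brack

/-- generalized Catalan numbers -/
def genCat (p : ℕ) : ℕ → ℕ
  | 0 => 1
  | n + 1 =>
      ∑ v ∈ (Finset.Nat.antidiagonalTuple p n).attach, ∏ k : Fin p, genCat p (v.1 k)
  decreasing_by
    have hv := Finset.Nat.mem_antidiagonalTuple.mp v.2
    have hle : v.1 k ≤ n := by
      calc v.1 k ≤ ∑ i, v.1 i :=
            Finset.single_le_sum (fun i _ => Nat.zero_le _) (Finset.mem_univ k)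
        _ = n := hv
    omega

/-- the set M(n,k,p) of weakly increasing n-tuples of positive integers
with u_i ≤ (p-1)(i-1)+k (here indices are 0-based) -/
def Mset (n k p : ℕ) : Set (Fin n → ℕ) :=
  {u | (∀ i : Fin n, 1 ≤ u i ∧ u i ≤ (p - 1) * (i : ℕ) + k) ∧
    ∀ i j : Fin n, i ≤ j → u i ≤ u j}

/-- the multiplication table of the 4-element groupoid -/
def mulA : Fin 4 → Fin 4 → Fin 4 :=
  ![![0, 0, 0, 0], ![0, 0, 0, 1], ![0, 0, 1, 2], ![0, 1, 2, 2]]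

def opA : (Fin 2 → Fin 4) → Fin 4 := fun v => mulA (v 0) (v 1)

lemma mulA_le_two : ∀ a b : Fin 4, (mulA a b).val ≤ 2 := by decide

lemma mulA_le_sub : ∀ a b : Fin 4, (mulA a b).val ≤ a.val + b.val - 3 := by decide

lemma mulA_val : ∀ a b : Fin 4,
    (mulA a b).val = if a.val = 3 ∧ b.val = 3 then 2 else a.val + b.val - 3 := by decide

lemma mulA_key (a b : Fin 4) (e1 e2 : ℕ) (ha : a.val = 3 - e1) (hb : b.val = 3 - e2)
    (h : 1 ≤ e1 + e2) : (mulA a b).val = 3 - (e1 + e2) := by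
  have := mulA_val a b
  have ha3 := a.is_lt
  have hb3 := b.is_lt
  split_ifs at this with hc
  · omega
  · rw [this]
    rcases Decidable.not_and_iff_or_not.mp hc with h' | h' <;> omega

lemma eggs_zero_of_isX (s : Brack 2) (h : s.isX = true) : s.eggs = 0 := by
  cases s with
  | x => rfl
  | node f => simp [Brack.isX] at h

lemma eggs_pos (s : Brack 2) (h : s.isX = false) : 1 ≤ s.eggs := by
  induction s with
  | x => simp [Brack.isX] at h
  | node f ih =>
    by_cases h0 : (f 0).isX
    · by_cases h1 : (f 1).isX
      · simp [Brack.eggs, h0, h1]; omega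
      · have := ih 1 (by simpa using h1)
        simp [Brack.eggs]; omega
    · have := ih 0 (by simpa using h0)
      simp [Brack.eggs]; omega

lemma evalFrom_node (v : ℕ → Fin 4) (f : Fin 2 → Brack 2) (j : ℕ) :
    Brack.evalFrom opA v (.node f) j =
      mulA (Brack.evalFrom opA v (f 0)
          (j + ∑ k ∈ Finset.univ.filter (· < (0 : Fin 2)), (f k).len))
        (Brack.evalFrom opA v (f 1)
          (j + ∑ k ∈ Finset.univ.filter (· < (1 : Fin 2)), (f k).len)) := by
  rw [Brack.evalFrom]; rfl

lemma eval_ub (s : Brack 2) : ∀ (v : ℕ → Fin 4) (j : ℕ),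
    (Brack.evalFrom opA v s j).val ≤ 3 - s.eggs := by
  induction s with
  | x => intro v j; simp [Brack.evalFrom, Brack.eggs]; omega
  | node f ih =>
    intro v j
    rw [evalFrom_node]
    have h0 := ih 0 v (j + ∑ k ∈ Finset.univ.filter (· < (0 : Fin 2)), (f k).len)
    have h1 := ih 1 v (j + ∑ k ∈ Finset.univ.filter (· < (1 : Fin 2)), (f k).len)
    set a := Brack.evalFrom opA v (f 0)
      (j + ∑ k ∈ Finset.univ.filter (· < (0 : Fin 2)), (f k).len)
    set b := Brack.evalFrom opA v (f 1)
      (j + ∑ k ∈ Finset.univ.filter (· < (1 : Fin 2)), (f k).len)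
    have hle2 := mulA_le_two a b
    have hle3 := mulA_le_sub a b
    by_cases hx : (f 0).isX = true ∧ (f 1).isX = true
    · have e0 := eggs_zero_of_isX _ hx.1
      have e1 := eggs_zero_of_isX _ hx.2
      simp [Brack.eggs, hx.1, hx.2, e0, e1]; omega
    · have hind : (if (f 0).isX && (f 1).isX then 1 else 0) = 0 := by
        rcases Bool.eq_false_or_eq_true (f 0).isX with h | h <;>
          rcases Bool.eq_false_or_eq_true (f 1).isX with h' | h' <;>
          simp_all
      simp only [Brack.eggs, hind]
      omega

lemma eval_const3 (s : Brack 2) : ∀ j : ℕ,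
    (Brack.evalFrom opA (fun _ => (3 : Fin 4)) s j).val = 3 - s.eggs := by
  induction s with
  | x => intro j; simp [Brack.evalFrom, Brack.eggs]
  | node f ih =>
    intro j
    rw [evalFrom_node]
    have h0 := ih 0 (j + ∑ k ∈ Finset.univ.filter (· < (0 : Fin 2)), (f k).len)
    have h1 := ih 1 (j + ∑ k ∈ Finset.univ.filter (· < (1 : Fin 2)), (f k).len)
    set a := Brack.evalFrom opA (fun _ => (3 : Fin 4)) (f 0)
      (j + ∑ k ∈ Finset.univ.filter (· < (0 : Fin 2)), (f k).len)
    set b := Brack.evalFrom opA (fun _ => (3 : Fin 4)) (f 1)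
      (j + ∑ k ∈ Finset.univ.filter (· < (1 : Fin 2)), (f k).len)
    by_cases hx : (f 0).isX = true ∧ (f 1).isX = true
    · have e0 := eggs_zero_of_isX _ hx.1
      have e1 := eggs_zero_of_isX _ hx.2
      have ha : a = 3 := by
        apply Fin.ext; rw [h0, e0]; rfl
      have hb : b = 3 := by
        apply Fin.ext; rw [h1, e1]; rfl
      rw [ha, hb]
      simp [Brack.eggs, hx.1, hx.2, e0, e1]
      decide
    · have hind : (if (f 0).isX && (f 1).isX then 1 else 0) = 0 := by
        rcases Bool.eq_false_or_eq_true (f 0).isX with h | h <;>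
          rcases Bool.eq_false_or_eq_true (f 1).isX with h' | h' <;>
          simp_all
      have hpos : 1 ≤ (f 0).eggs + (f 1).eggs := by
        rcases Bool.eq_false_or_eq_true (f 0).isX with h | h
        · rcases Bool.eq_false_or_eq_true (f 1).isX with h' | h'
          · exact absurd ⟨h, h'⟩ hx
          · have := eggs_pos _ h'; omega
        · have := eggs_pos _ h; omega
      have := mulA_key a b _ _ h0 h1 hpos
      simp only [Brack.eggs, hind]
      omega

theorem stmt_19 (s : Brack 2) :
    (∀ v : ℕ → Fin 4, (Brack.eval opA s v).val ≤ 3 - Brack.eggs s) ∧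
    (Brack.eval opA s (fun _ => 3)).val = 3 - Brack.eggs s :=
  ⟨fun v => eval_ub s v 0, eval_const3 s 0⟩
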